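/- arXiv:2508.18759 — 2 statements merged into one kernel-verified Lean document; each statement's English description precedes it below -/
import Mathlib

section
/- Fix natural numbers k < n, a k-dimensional linear subspace V of ℝⁿ, and d ≤ n − k. Let p ∈ ℝⁿ and let Δ be a linear (d−1)-simplex in ℝⁿ ∖ {p} whose affine span contains the origin and which is transverse to 𝔉(V). Let π_Δ denote the orthogonal projection of ℝⁿ onto Gr(Δ)⊥. Then the join p⋆Δ is a non-degenerate linear d-simplex transverse to 𝔉(V) if and only if π_Δ(p) ∉ π_Δ(V). -/
noncomputable section

open Metric Set

/-- Two linear subspaces of ℝⁿ are transverse if the dimension of their span is maximal. -/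
def Transv {n : ℕ} (V W : Submodule ℝ (EuclideanSpace ℝ (Fin n))) : Prop :=
  Module.finrank ℝ ↥(V ⊔ W) = min (Module.finrank ℝ ↥V + Module.finrank ℝ ↥W) n

/-- The space of directions of the affine span of a family of points (Gr(Δ)). -/
def simplexDir {n m : ℕ} (v : Fin m → EuclideanSpace ℝ (Fin n)) :
    Submodule ℝ (EuclideanSpace ℝ (Fin n)) :=
  (affineSpan ℝ (Set.range v)).direction

/-- Orthogonal projection of ℝⁿ onto the orthogonal complement of V, as a map ℝⁿ → ℝⁿ. -/
def projPerp {n : ℕ} (V : Submodule ℝ (EuclideanSpace ℝ (Fin n)))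
    (x : EuclideanSpace ℝ (Fin n)) : EuclideanSpace ℝ (Fin n) :=
  (Submodule.orthogonalProjection Vᗮ x : EuclideanSpace ℝ (Fin n))

/-- Orthogonal projection onto V as a continuous linear endomorphism of ℝⁿ. -/
def projCL {n : ℕ} (V : Submodule ℝ (EuclideanSpace ℝ (Fin n))) :
    EuclideanSpace ℝ (Fin n) →L[ℝ] EuclideanSpace ℝ (Fin n) :=
  V.subtypeL.comp (Submodule.orthogonalProjection V)

/-- Operator-norm distance between orthogonal projections. -/
def dProj {n : ℕ} (V W : Submodule ℝ (EuclideanSpace ℝ (Fin n))) : ℝ :=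
  ‖projCL V - projCL W‖

/-- `p⋆Δ` is `δ`-semitransverse to `𝔉(V)` in `p`. -/
def SemiT {n m : ℕ} (δ : ℝ) (p : EuclideanSpace ℝ (Fin n))
    (v : Fin m → EuclideanSpace ℝ (Fin n))
    (V : Submodule ℝ (EuclideanSpace ℝ (Fin n))) : Prop :=
  ∀ p' : EuclideanSpace ℝ (Fin n), dist p' p < δ →
    AffineIndependent ℝ (Fin.cons p' v : Fin (m+1) → EuclideanSpace ℝ (Fin n)) ∧
    Transv (simplexDir (Fin.cons p' v : Fin (m+1) → EuclideanSpace ℝ (Fin n))) V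

/-- Maximal distance between two vertices of a simplex. -/
def rMax {n m : ℕ} (v : Fin m → EuclideanSpace ℝ (Fin n)) : ℝ :=
  ⨆ i, ⨆ j, dist (v i) (v j)

/-- Minimal distance between a vertex and the affine span of the opposite face. -/
def rMin {n m : ℕ} (v : Fin m → EuclideanSpace ℝ (Fin n)) : ℝ :=
  ⨅ i, Metric.infDist (v i) (affineSpan ℝ (v '' {i}ᶜ) : Set (EuclideanSpace ℝ (Fin n)))

/-- The degeneracy quantity Λ(Δ). -/
def Lam {n m : ℕ} (v : Fin (m+1) → EuclideanSpace ℝ (Fin n)) : ℝ :=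
  sSup {t : ℝ | ∃ lam : Fin m → ℝ,
    ‖∑ i, lam i • (v i.succ - v 0)‖ = 1 ∧ ∃ i, t = |lam i|}

/-- ε-transversality of a simplex with vertices `v` to the constant foliation `𝔉(V)`. -/
def EpsT {n m : ℕ} (ε : ℝ) (v : Fin (m+1) → EuclideanSpace ℝ (Fin n))
    (V : Submodule ℝ (EuclideanSpace ℝ (Fin n))) : Prop :=
  ∀ D : Submodule ℝ (EuclideanSpace ℝ (Fin n)),
    Module.finrank ℝ ↥D = m → dProj (simplexDir v) D < ε → Transv D V

/-- δ-semitransversality of a simplex in its `i`-th vertex. -/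
def STat {n m : ℕ} (δ : ℝ) (w : Fin m → EuclideanSpace ℝ (Fin n)) (i : Fin m)
    (V : Submodule ℝ (EuclideanSpace ℝ (Fin n))) : Prop :=
  ∀ p' : EuclideanSpace ℝ (Fin n), dist p' (w i) < δ →
    AffineIndependent ℝ (Function.update w i p') ∧
    Transv (simplexDir (Function.update w i p')) V

/-- The coordinate subspace ℝᵏ × {0} of ℝⁿ. -/
def stdFol (n k : ℕ) : Submodule ℝ (EuclideanSpace ℝ (Fin n)) where
  carrier := {x | ∀ i : Fin n, k ≤ (i : ℕ) → x i = 0}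
  zero_mem' := fun i _ => rfl
  add_mem' := by
    intro x y hx hy i hi
    show x i + y i = 0
    rw [hx i hi, hy i hi, add_zero]
  smul_mem' := by
    intro c x hx i hi
    show c * x i = 0
    rw [hx i hi, mul_zero]

/-- Graph of a linear map V → V⊥ as a subspace of ℝⁿ. -/
def graphOf {n : ℕ} {V : Submodule ℝ (EuclideanSpace ℝ (Fin n))}
    (T : ↥V →L[ℝ] ↥Vᗮ) : Submodule ℝ (EuclideanSpace ℝ (Fin n)) :=
  LinearMap.range (V.subtype + Vᗮ.subtype.comp T.toLinearMap)

section Aux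
variable {E : Type*} [NormedAddCommGroup E] [InnerProductSpace ℝ E]

lemma dir_eq_span' {s : Set E} (h0 : (0 : E) ∈ affineSpan ℝ s) :
    (affineSpan ℝ s).direction = Submodule.span ℝ s := by
  apply le_antisymm
  · rw [direction_affineSpan]
    refine Submodule.span_le.2 ?_
    rintro x ⟨a, ha, b, hb, rfl⟩
    exact sub_mem (Submodule.subset_span ha) (Submodule.subset_span hb)
  · refine Submodule.span_le.2 fun x hx => ?_
    have := AffineSubspace.vsub_mem_direction (subset_affineSpan ℝ s hx) h0
    simpa using this

lemma mem_affineSpan_iff_mem_span' {s : Set E} (h0 : (0 : E) ∈ affineSpan ℝ s) (x : E) :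
    x ∈ affineSpan ℝ s ↔ x ∈ Submodule.span ℝ s := by
  rw [← dir_eq_span' h0]
  constructor
  · intro hx
    simpa using AffineSubspace.vsub_mem_direction hx h0
  · intro hx
    simpa using AffineSubspace.vadd_mem_of_mem_direction hx h0
end Aux




theorem stmt_2 (n k d : ℕ) (hk : k < n) (hd : d ≤ n - k)
    (V : Submodule ℝ (EuclideanSpace ℝ (Fin n))) (hV : Module.finrank ℝ ↥V = k)
    (p : EuclideanSpace ℝ (Fin n)) (v : Fin d → EuclideanSpace ℝ (Fin n))
    (hAI : AffineIndependent ℝ v)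
    (hp : p ∉ convexHull ℝ (Set.range v))
    (h0 : (0 : EuclideanSpace ℝ (Fin n)) ∈ affineSpan ℝ (Set.range v))
    (hT : Transv (simplexDir v) V) :
    (AffineIndependent ℝ (Fin.cons p v : Fin (d+1) → EuclideanSpace ℝ (Fin n)) ∧
      Transv (simplexDir (Fin.cons p v : Fin (d+1) → EuclideanSpace ℝ (Fin n))) V) ↔
      projPerp (simplexDir v) p ∉
        projPerp (simplexDir v) '' (V : Set (EuclideanSpace ℝ (Fin n))) := by
  -- d ≠ 0
  have hd0 : d ≠ 0 := by
    rintro rfl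
    rw [Set.range_eq_empty v] at h0
    have : affineSpan ℝ (∅ : Set (EuclideanSpace ℝ (Fin n))) = ⊥ := by
      simp [AffineSubspace.span_empty]
    rw [this] at h0
    exact AffineSubspace.notMem_bot ℝ _ 0 h0
  obtain ⟨e, rfl⟩ := Nat.exists_eq_succ_of_ne_zero hd0
  set W : Submodule ℝ (EuclideanSpace ℝ (Fin n)) := simplexDir v with hW
  have hWspan : W = Submodule.span ℝ (Set.range v) := dir_eq_span' h0
  -- rank of W
  have hWrank : Module.finrank ℝ ↥W = e := by
    have := hAI.finrank_vectorSpan (by simp : Fintype.card (Fin (e+1)) = e + 1)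
    rw [hW, simplexDir, direction_affineSpan]
    exact this
  have hekn : e + 1 + k ≤ n := by omega
  -- W ⊓ V = ⊥
  have hsum := Submodule.finrank_sup_add_finrank_inf_eq W V
  have hTW : Module.finrank ℝ ↥(W ⊔ V) = e + k := by
    have := hT
    rw [Transv] at this
    rw [this, hWrank, hV]
    omega
  have hWV : W ⊓ V = ⊥ := by
    rw [← Submodule.finrank_eq_zero (R := ℝ)]
    omega
  -- membership in big span
  have h0' : (0 : EuclideanSpace ℝ (Fin n)) ∈
      affineSpan ℝ (Set.range (Fin.cons p v : Fin (e+1+1) → EuclideanSpace ℝ (Fin n))) := by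
    refine affineSpan_mono ℝ ?_ h0
    rw [Fin.range_cons]
    exact Set.subset_insert _ _
  have hdir : simplexDir (Fin.cons p v : Fin (e+1+1) → EuclideanSpace ℝ (Fin n)) =
      Submodule.span ℝ {p} ⊔ W := by
    rw [simplexDir, dir_eq_span' h0', Fin.range_cons, Submodule.span_insert, hWspan]
  -- image of nonzero indices
  have himg : (Fin.cons p v : Fin (e+1+1) → EuclideanSpace ℝ (Fin n)) '' {x | x ≠ 0}
      = Set.range v := by
    ext y
    constructor
    · rintro ⟨x, hx, rfl⟩
      obtain ⟨j, rfl⟩ := Fin.eq_succ_of_ne_zero hx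
      refine ⟨j, ?_⟩
      simp
    · rintro ⟨j, rfl⟩
      exact ⟨j.succ, Fin.succ_ne_zero j, Fin.cons_succ _ _ _⟩
  -- AI equivalence
  have hAIiff : AffineIndependent ℝ (Fin.cons p v : Fin (e+1+1) → EuclideanSpace ℝ (Fin n))
      ↔ p ∉ W := by
    constructor
    · intro hA
      intro hpW
      have := hA.notMem_affineSpan_diff 0 Set.univ
      have heq : Set.univ \ {(0 : Fin (e+1+1))} = {x | x ≠ 0} := by ext x; simp
      rw [heq, himg, Fin.cons_zero] at this
      exact this ((mem_affineSpan_iff_mem_span' h0 p).2 (hWspan ▸ hpW))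
    · intro hpW
      have hsub : AffineIndependent ℝ
          (fun x : {y : Fin (e+1+1) // y ≠ 0} =>
            (Fin.cons p v : Fin (e+1+1) → EuclideanSpace ℝ (Fin n)) x.1) := by
        have hemb : ∀ x : {y : Fin (e+1+1) // y ≠ 0},
            (v ∘ fun x : {y : Fin (e+1+1) // y ≠ 0} => (x : Fin (e+1+1)).pred x.2) x
            = (Fin.cons p v : Fin (e+1+1) → EuclideanSpace ℝ (Fin n)) x.1 := by
          rintro ⟨x, hx⟩
          obtain ⟨j, rfl⟩ := Fin.eq_succ_of_ne_zero hx
          simp [Function.comp, Fin.pred_succ]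
        have hinj : Function.Injective
            (fun x : {y : Fin (e+1+1) // y ≠ 0} => (x : Fin (e+1+1)).pred x.2) := by
          rintro ⟨x, hx⟩ ⟨y, hy⟩ h
          have h2 := congrArg Fin.succ h
          simp only [Fin.succ_pred] at h2
          exact Subtype.ext h2
        have := hAI.comp_embedding ⟨_, hinj⟩
        exact (funext hemb : _) ▸ this
      refine AffineIndependent.affineIndependent_of_notMem_span hsub ?_
      rw [himg, Fin.cons_zero]
      intro hmem
      exact hpW (hWspan ▸ (mem_affineSpan_iff_mem_span' h0 p).1 hmem)
  -- projection equivalence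
  have hproj : projPerp W p ∈ projPerp W '' (V : Set (EuclideanSpace ℝ (Fin n)))
      ↔ p ∈ W ⊔ V := by
    constructor
    · rintro ⟨u, hu, heq⟩
      have h1 : Submodule.orthogonalProjection Wᗮ (p - u) = 0 := by
        rw [map_sub, sub_eq_zero]
        exact Subtype.ext heq.symm
      have h2 : p - u ∈ Wᗮᗮ := Submodule.orthogonalProjectionOnto_eq_zero_iff.1 h1
      rw [Submodule.orthogonal_orthogonal] at h2
      have : p = (p - u) + u := by abel
      rw [this]
      exact Submodule.add_mem_sup h2 hu
    · intro hmem
      obtain ⟨w, hw, u, hu, rfl⟩ := Submodule.mem_sup.1 hmem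
      refine ⟨u, hu, ?_⟩
      have h1 : Submodule.orthogonalProjection Wᗮ ((w + u) - u) = 0 := by
        rw [Submodule.orthogonalProjectionOnto_eq_zero_iff, Submodule.orthogonal_orthogonal]
        simpa using hw
      rw [map_sub, sub_eq_zero] at h1
      exact congrArg Subtype.val h1.symm
  rw [hproj]
  constructor
  · rintro ⟨hA, hTr⟩ hmem
    have hpW : p ∉ W := hAIiff.1 hA
    have hW'rank : Module.finrank ℝ
        ↥(simplexDir (Fin.cons p v : Fin (e+1+1) → EuclideanSpace ℝ (Fin n))) = e + 1 := by
      have := hA.finrank_vectorSpan (by simp : Fintype.card (Fin (e+1+1)) = (e+1) + 1)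
      rw [simplexDir, direction_affineSpan]
      exact this
    have hsum' := Submodule.finrank_sup_add_finrank_inf_eq
      (simplexDir (Fin.cons p v : Fin (e+1+1) → EuclideanSpace ℝ (Fin n))) V
    have h1 : Module.finrank ℝ
        ↥(simplexDir (Fin.cons p v : Fin (e+1+1) → EuclideanSpace ℝ (Fin n)) ⊔ V)
        = e + 1 + k := by
      rw [Transv] at hTr
      rw [hTr, hW'rank, hV]
      omega
    have hW'V : simplexDir (Fin.cons p v : Fin (e+1+1) → EuclideanSpace ℝ (Fin n)) ⊓ V = ⊥ := by
      rw [← Submodule.finrank_eq_zero (R := ℝ)]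
      omega
    obtain ⟨w, hw, u, hu, rfl⟩ := Submodule.mem_sup.1 hmem
    have hpW' : w + u ∈ simplexDir (Fin.cons (w+u) v : Fin (e+1+1) → EuclideanSpace ℝ (Fin n)) := by
      rw [hdir]
      exact Submodule.mem_sup_left (Submodule.mem_span_singleton_self _)
    have huW' : u ∈ simplexDir (Fin.cons (w+u) v : Fin (e+1+1) → EuclideanSpace ℝ (Fin n)) := by
      have hwW' : w ∈ simplexDir (Fin.cons (w+u) v : Fin (e+1+1) → EuclideanSpace ℝ (Fin n)) := by
        rw [hdir]
        exact Submodule.mem_sup_right hw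
      have := sub_mem hpW' hwW'
      simpa using this
    have hbot : u ∈ simplexDir (Fin.cons (w+u) v : Fin (e+1+1) → EuclideanSpace ℝ (Fin n)) ⊓ V :=
      ⟨huW', hu⟩
    rw [hW'V, Submodule.mem_bot] at hbot
    subst hbot
    exact hpW (by simpa using hw)
  · intro hmem
    have hpW : p ∉ W := fun h => hmem (Submodule.mem_sup_left h)
    have hA := hAIiff.2 hpW
    refine ⟨hA, ?_⟩
    have hW'rank : Module.finrank ℝ
        ↥(simplexDir (Fin.cons p v : Fin (e+1+1) → EuclideanSpace ℝ (Fin n))) = e + 1 := by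
      have := hA.finrank_vectorSpan (by simp : Fintype.card (Fin (e+1+1)) = (e+1) + 1)
      rw [simplexDir, direction_affineSpan]
      exact this
    have hW'V : simplexDir (Fin.cons p v : Fin (e+1+1) → EuclideanSpace ℝ (Fin n)) ⊓ V = ⊥ := by
      rw [eq_bot_iff]
      rintro u ⟨huW', huV⟩
      rw [SetLike.mem_coe, hdir] at huW'
      obtain ⟨a, ha, w, hw, rfl⟩ := Submodule.mem_sup.1 huW'
      obtain ⟨t, rfl⟩ := Submodule.mem_span_singleton.1 ha
      rcases eq_or_ne t 0 with rfl | ht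
      · simp only [zero_smul, zero_add] at huV ⊢
        have : w ∈ W ⊓ V := ⟨hw, huV⟩
        rwa [hWV, Submodule.mem_bot] at this
      · exfalso
        apply hmem
        have h1 : (t • p + w) - w ∈ W ⊔ V :=
          sub_mem (Submodule.mem_sup_right huV) (Submodule.mem_sup_left hw)
        have h2 : t • p ∈ W ⊔ V := by simpa using h1
        have h3 : t⁻¹ • (t • p) ∈ W ⊔ V := Submodule.smul_mem _ _ h2
        rwa [smul_smul, inv_mul_cancel₀ ht, one_smul] at h3
    rw [Transv]
    have hsum' := Submodule.finrank_sup_add_finrank_inf_eq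
      (simplexDir (Fin.cons p v : Fin (e+1+1) → EuclideanSpace ℝ (Fin n))) V
    have hb : Module.finrank ℝ ↥(⊥ : Submodule ℝ (EuclideanSpace ℝ (Fin n))) = 0 :=
      finrank_bot ℝ _
    rw [hW'V, hb] at hsum'
    rw [hW'rank, hV] at hsum' ⊢
    omega
end
end

section
/- Fix natural numbers d and k < n, and a k-dimensional linear subspace V of ℝⁿ. Then there exists a constant C > 0 such that for every ζ > 0 and every linear d-simplex Δ in ℝⁿ with vertices v₀, …, v_d the following holds: if every tuple (v₀', …, v_d') with |v_i' − v_i| < ζ for all i consists of affinely independent points spanning a linear d-simplex transverse to 𝔉(V), then Δ is (C ζ / r_max(Δ))-transverse to 𝔉(V). -/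
noncomputable section

open Metric Set

theorem stmt_7 (n d k : ℕ) (hk : k < n)
    (V : Submodule ℝ (EuclideanSpace ℝ (Fin n))) (hV : Module.finrank ℝ ↥V = k) :
    ∃ C > (0:ℝ), ∀ ζ : ℝ, 0 < ζ →
      ∀ v : Fin (d+1) → EuclideanSpace ℝ (Fin n), AffineIndependent ℝ v →
        (∀ v' : Fin (d+1) → EuclideanSpace ℝ (Fin n), (∀ i, dist (v' i) (v i) < ζ) →
          AffineIndependent ℝ v' ∧ Transv (simplexDir v') V) →
        EpsT (C * ζ / rMax v) v V := by
  refine ⟨1, one_pos, ?_⟩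
  intro ζ hζ v _ h
  intro D hDrank hdist
  rcases le_or_gt (rMax v) 0 with hr | hr
  · -- degenerate: ε ≤ 0, but dProj ≥ 0
    exfalso
    have hε : 1 * ζ / rMax v ≤ 0 :=
      div_nonpos_iff.mpr (Or.inl ⟨by linarith, hr⟩)
    have : (0:ℝ) ≤ dProj (simplexDir v) D := norm_nonneg _
    linarith
  · set G := simplexDir v with hG
    have hmemG : ∀ i, v i - v 0 ∈ G := by
      intro i
      have h1 : v i ∈ affineSpan ℝ (Set.range v) :=
        mem_affineSpan ℝ (Set.mem_range_self i)
      have h0 : v 0 ∈ affineSpan ℝ (Set.range v) :=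
        mem_affineSpan ℝ (Set.mem_range_self 0)
      exact AffineSubspace.vsub_mem_direction h1 h0
    have hfixG : ∀ i, projCL G (v i - v 0) = v i - v 0 := by
      intro i
      show ((Submodule.orthogonalProjection G (v i - v 0) : _) : EuclideanSpace ℝ (Fin n)) = _
      exact Submodule.starProjection_eq_self_iff.mpr (hmemG i)
    have hrmax : ∀ i, ‖v i - v 0‖ ≤ rMax v := by
      intro i
      have h1 : dist (v i) (v 0) ≤ ⨆ j, dist (v i) (v j) :=
        le_ciSup (f := fun j => dist (v i) (v j))
          (Set.Finite.bddAbove (Set.finite_range _)) 0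
      have h2 : (⨆ j, dist (v i) (v j)) ≤ rMax v :=
        le_ciSup (f := fun i => ⨆ j, dist (v i) (v j))
          (Set.Finite.bddAbove (Set.finite_range _)) i
      simpa [dist_eq_norm] using h1.trans h2
    set v' : Fin (d+1) → EuclideanSpace ℝ (Fin n) :=
      fun i => v 0 + projCL D (v i - v 0) with hv'
    have hclose : ∀ i, dist (v' i) (v i) < ζ := by
      intro i
      have heq : v' i - v i = (projCL D - projCL G) (v i - v 0) := by
        simp [hv', hfixG i]
        abel
      have hnorm : ‖v' i - v i‖ ≤ ‖projCL D - projCL G‖ * ‖v i - v 0‖ := by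
        rw [heq]; exact (projCL D - projCL G).le_opNorm _
      have hop : ‖projCL D - projCL G‖ = dProj G D := by
        rw [dProj, norm_sub_rev]
      have h1 : ‖projCL D - projCL G‖ * ‖v i - v 0‖ ≤ dProj G D * rMax v := by
        rw [hop]
        exact mul_le_mul_of_nonneg_left (hrmax i) (norm_nonneg _)
      have h2 : dProj G D * rMax v < (1 * ζ / rMax v) * rMax v :=
        mul_lt_mul_of_pos_right hdist hr
      have h3 : (1 * ζ / rMax v) * rMax v = ζ := by
        field_simp
      rw [dist_eq_norm]
      linarith
    obtain ⟨hAI, hT⟩ := h v' hclose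
    have hle : simplexDir v' ≤ D := by
      rw [simplexDir, direction_affineSpan]
      apply Submodule.span_le.mpr
      rintro x ⟨a, ⟨i, rfl⟩, b, ⟨j, rfl⟩, rfl⟩
      show v' i -ᵥ v' j ∈ D
      have : v' i -ᵥ v' j = projCL D (v i - v 0) - projCL D (v j - v 0) := by
        simp [hv']
      rw [this]
      exact sub_mem (SetLike.coe_mem _) (SetLike.coe_mem _)
    have hfr : Module.finrank ℝ (simplexDir v') = d := by
      rw [simplexDir, direction_affineSpan]
      exact hAI.finrank_vectorSpan (by simp)
    have hEq : simplexDir v' = D :=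
      Submodule.eq_of_le_of_finrank_eq hle (by rw [hfr, hDrank])
    rwa [hEq] at hT
end
end
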